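/- The function G(c) = ∫₀^∞ (√u − 1/√u) exp(−c(u³/6 − u/2)) du is strictly decreasing on (0,∞); in fact its derivative G'(c) = ∫₀^∞ (√u − 1/√u)(−u³/6 + u/2) exp(c(−u³/6 + u/2)) du is strictly negative for every c > 0. -/

import Mathlib

open Real MeasureTheory Set Filter

private lemma hcont1 : ContinuousOn (fun u : ℝ => Real.sqrt u - 1 / Real.sqrt u) (Set.Ioi 0) := by
  exact Real.continuous_sqrt.continuousOn.sub
    (continuousOn_const.div Real.continuous_sqrt.continuousOn
      fun u hu => Real.sqrt_ne_zero'.mpr hu)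

private lemma exp_bound1 {c : ℝ} (hc : 0 < c) {u : ℝ} (hu : 0 ≤ u) :
    Real.exp (-c * (u ^ 3 / 6 - u / 2)) ≤ Real.exp (2 * c) * Real.exp (-(c / 8) * u ^ 3) := by
  rw [← Real.exp_add]
  apply Real.exp_le_exp.mpr
  have h : u / 2 ≤ u ^ 3 / 24 + 2 := by
    nlinarith [mul_nonneg (sq_nonneg (u - 2)) (by linarith : (0:ℝ) ≤ u + 4)]
  nlinarith [mul_le_mul_of_nonneg_left h hc.le]

private lemma exp_bound2 {c x : ℝ} (hc : 0 < c) (hx : x ∈ Metric.ball c (c / 2)) {u : ℝ}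
    (hu : 0 ≤ u) :
    Real.exp (-x * (u ^ 3 / 6 - u / 2)) ≤ Real.exp (3 * c / 2) * Real.exp (-(c / 16) * u ^ 3) := by
  have hx' : |x - c| < c / 2 := by simpa [Metric.mem_ball, Real.dist_eq] using hx
  obtain ⟨hl, hr⟩ := abs_lt.mp hx'
  have hx1 : c / 2 < x := by linarith
  have hx2 : x < 3 * c / 2 := by linarith
  have hg : -(1/3 : ℝ) ≤ u ^ 3 / 6 - u / 2 := by
    nlinarith [mul_nonneg (sq_nonneg (u - 1)) (by linarith : (0:ℝ) ≤ u + 2)]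
  have step1 : -x * (u ^ 3 / 6 - u / 2) ≤ c / 2 + -(c/2) * (u ^ 3 / 6 - u / 2) := by
    rcases le_or_gt 0 (u ^ 3 / 6 - u / 2) with h | h
    · nlinarith [mul_nonneg (by linarith : (0:ℝ) ≤ x - c/2) h]
    · nlinarith [mul_le_mul_of_nonneg_right hx2.le (by linarith : (0:ℝ) ≤ -(u^3/6 - u/2)),
        mul_le_mul_of_nonneg_left (by linarith : -(u^3/6 - u/2) ≤ 1/3) (by linarith : (0:ℝ) ≤ 3*c/2)]
  calc Real.exp (-x * (u ^ 3 / 6 - u / 2))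
      ≤ Real.exp (c/2) * Real.exp (-(c/2) * (u ^ 3 / 6 - u / 2)) := by
        rw [← Real.exp_add]; exact Real.exp_le_exp.mpr step1
    _ ≤ Real.exp (c/2) * (Real.exp (2 * (c/2)) * Real.exp (-((c/2) / 8) * u ^ 3)) :=
        mul_le_mul_of_nonneg_left (exp_bound1 (by linarith) hu) (Real.exp_pos _).le
    _ = Real.exp (3 * c / 2) * Real.exp (-(c / 16) * u ^ 3) := by
        rw [← mul_assoc, ← Real.exp_add]
        norm_num
        ring_nf

private lemma int_rpow_exp {b : ℝ} (hb : 0 < b) {s : ℝ} (hs : (-1:ℝ) < s) :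
    IntegrableOn (fun u : ℝ => u ^ s * Real.exp (-b * u ^ 3)) (Set.Ioi 0) := by
  have h := integrableOn_rpow_mul_exp_neg_mul_rpow hs (by norm_num : (0:ℝ) < 3) hb
  apply h.congr_fun _ measurableSet_Ioi
  intro u hu
  simp only [show ((3:ℝ)) = ((3:ℕ):ℝ) by norm_num, Real.rpow_natCast]

private lemma h1_abs {u : ℝ} (hu : 0 < u) :
    |Real.sqrt u - 1 / Real.sqrt u| ≤ u ^ ((1:ℝ)/2) + u ^ (-(1:ℝ)/2) := by
  have e1 : Real.sqrt u = u ^ ((1:ℝ)/2) := by rw [Real.sqrt_eq_rpow]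
  have e2 : 1 / Real.sqrt u = u ^ (-(1:ℝ)/2) := by
    rw [e1, one_div, ← Real.rpow_neg hu.le]
    norm_num
  calc |Real.sqrt u - 1 / Real.sqrt u| ≤ |Real.sqrt u| + |1 / Real.sqrt u| := abs_sub _ _
    _ = u ^ ((1:ℝ)/2) + u ^ (-(1:ℝ)/2) := by
        rw [abs_of_nonneg (Real.sqrt_nonneg u), abs_of_nonneg (by positivity), e2, e1]

private lemma prod_bound {u : ℝ} (hu : 0 < u) :
    |Real.sqrt u - 1 / Real.sqrt u| * |(-u ^ 3 / 6 + u / 2)| ≤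
      u ^ ((7:ℝ)/2) / 6 + u ^ ((3:ℝ)/2) / 2 + u ^ ((5:ℝ)/2) / 6 + u ^ ((1:ℝ)/2) / 2 := by
  have h2 : |(-u ^ 3 / 6 + u / 2)| ≤ u ^ 3 / 6 + u / 2 := by
    rw [abs_le]
    constructor <;> nlinarith [pow_pos hu 3]
  have key := mul_le_mul (h1_abs hu) h2 (abs_nonneg _) (by positivity)
  refine key.trans (le_of_eq ?_)
  have r1 : u ^ ((1:ℝ)/2) * u ^ (3:ℕ) = u ^ ((7:ℝ)/2) := by
    rw [← Real.rpow_natCast u 3, ← Real.rpow_add hu]; norm_num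
  have r2 : u ^ ((1:ℝ)/2) * u = u ^ ((3:ℝ)/2) := by
    nth_rewrite 2 [← Real.rpow_one u]
    rw [← Real.rpow_add hu]; norm_num
  have r3 : u ^ (-(1:ℝ)/2) * u ^ (3:ℕ) = u ^ ((5:ℝ)/2) := by
    rw [← Real.rpow_natCast u 3, ← Real.rpow_add hu]; norm_num
  have r4 : u ^ (-(1:ℝ)/2) * u = u ^ ((1:ℝ)/2) := by
    nth_rewrite 2 [← Real.rpow_one u]
    rw [← Real.rpow_add hu]; norm_num
  linear_combination r1/6 + r2/2 + r3/6 + r4/2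

private lemma hpoly : Continuous fun u : ℝ => -u ^ 3 / 6 + u / 2 := by continuity

private lemma hcontF (x : ℝ) : ContinuousOn
    (fun u : ℝ => (Real.sqrt u - 1 / Real.sqrt u) * Real.exp (-x * (u ^ 3 / 6 - u / 2)))
    (Set.Ioi 0) := by
  apply hcont1.mul
  exact (Real.continuous_exp.comp (by continuity)).continuousOn

private lemma hcontF' (x : ℝ) : ContinuousOn
    (fun u : ℝ => (Real.sqrt u - 1 / Real.sqrt u) * (-u ^ 3 / 6 + u / 2) *
      Real.exp (x * (-u ^ 3 / 6 + u / 2))) (Set.Ioi 0) := by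
  apply ContinuousOn.mul (hcont1.mul hpoly.continuousOn)
  exact (Real.continuous_exp.comp (by continuity)).continuousOn

private lemma intF (c : ℝ) (hc : 0 < c) : IntegrableOn
    (fun u : ℝ => (Real.sqrt u - 1 / Real.sqrt u) * Real.exp (-c * (u ^ 3 / 6 - u / 2)))
    (Set.Ioi 0) := by
  have hb : 0 < c / 8 := by linarith
  have hint : IntegrableOn (fun u : ℝ =>
      Real.exp (2 * c) * (u ^ ((1:ℝ)/2) * Real.exp (-(c/8) * u ^ 3)
        + u ^ (-(1:ℝ)/2) * Real.exp (-(c/8) * u ^ 3))) (Set.Ioi 0) := by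
    exact (((int_rpow_exp hb (by norm_num : (-1:ℝ) < 1/2)).add
      (int_rpow_exp hb (by norm_num : (-1:ℝ) < -1/2))).const_mul _)
  apply Integrable.mono' hint ((hcontF c).aestronglyMeasurable measurableSet_Ioi)
  rw [ae_restrict_iff' measurableSet_Ioi]
  filter_upwards with u hu
  have hu' : (0:ℝ) < u := hu
  rw [norm_mul, Real.norm_eq_abs, Real.norm_eq_abs, Real.abs_exp]
  calc |Real.sqrt u - 1 / Real.sqrt u| * Real.exp (-c * (u ^ 3 / 6 - u / 2))
      ≤ (u ^ ((1:ℝ)/2) + u ^ (-(1:ℝ)/2)) * (Real.exp (2 * c) * Real.exp (-(c/8) * u ^ 3)) := by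
        apply mul_le_mul (h1_abs hu') (exp_bound1 hc hu'.le) (Real.exp_pos _).le
        have := Real.rpow_nonneg hu'.le ((1:ℝ)/2)
        have := Real.rpow_nonneg hu'.le (-(1:ℝ)/2)
        linarith
    _ = _ := by ring

private lemma bound_int (c : ℝ) (hc : 0 < c) : IntegrableOn
    (fun u : ℝ => Real.exp (3 * c / 2) *
      (u ^ ((7:ℝ)/2) * Real.exp (-(c/16) * u ^ 3) / 6 +
       u ^ ((3:ℝ)/2) * Real.exp (-(c/16) * u ^ 3) / 2 +
       u ^ ((5:ℝ)/2) * Real.exp (-(c/16) * u ^ 3) / 6 +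
       u ^ ((1:ℝ)/2) * Real.exp (-(c/16) * u ^ 3) / 2)) (Set.Ioi 0) := by
  have hb : 0 < c / 16 := by linarith
  exact ((((int_rpow_exp hb (by norm_num : (-1:ℝ) < 7/2)).div_const 6).add
    ((int_rpow_exp hb (by norm_num : (-1:ℝ) < 3/2)).div_const 2)).add
    ((int_rpow_exp hb (by norm_num : (-1:ℝ) < 5/2)).div_const 6)).add
    ((int_rpow_exp hb (by norm_num : (-1:ℝ) < 1/2)).div_const 2) |>.const_mul _

private lemma deriv_key (c : ℝ) (hc : 0 < c) :
    IntegrableOn (fun u : ℝ => (Real.sqrt u - 1 / Real.sqrt u) * (-u ^ 3 / 6 + u / 2) *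
        Real.exp (c * (-u ^ 3 / 6 + u / 2))) (Set.Ioi 0) ∧
    HasDerivAt (fun x => ∫ u in Set.Ioi (0:ℝ),
        (Real.sqrt u - 1 / Real.sqrt u) * Real.exp (-x * (u ^ 3 / 6 - u / 2)))
      (∫ u in Set.Ioi (0:ℝ), (Real.sqrt u - 1 / Real.sqrt u) * (-u ^ 3 / 6 + u / 2) *
        Real.exp (c * (-u ^ 3 / 6 + u / 2))) c := by
  have main := hasDerivAt_integral_of_dominated_loc_of_deriv_le
    (μ := volume.restrict (Set.Ioi (0:ℝ)))
    (F := fun x u => (Real.sqrt u - 1 / Real.sqrt u) * Real.exp (-x * (u ^ 3 / 6 - u / 2)))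
    (F' := fun x u => (Real.sqrt u - 1 / Real.sqrt u) * (-u ^ 3 / 6 + u / 2) *
        Real.exp (x * (-u ^ 3 / 6 + u / 2)))
    (bound := fun u : ℝ => Real.exp (3 * c / 2) *
      (u ^ ((7:ℝ)/2) * Real.exp (-(c/16) * u ^ 3) / 6 +
       u ^ ((3:ℝ)/2) * Real.exp (-(c/16) * u ^ 3) / 2 +
       u ^ ((5:ℝ)/2) * Real.exp (-(c/16) * u ^ 3) / 6 +
       u ^ ((1:ℝ)/2) * Real.exp (-(c/16) * u ^ 3) / 2))
    (Metric.ball_mem_nhds c (show 0 < c / 2 by linarith))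
    (Eventually.of_forall fun x => ((hcontF x).aestronglyMeasurable measurableSet_Ioi))
    (intF c hc)
    ((hcontF' c).aestronglyMeasurable measurableSet_Ioi)
    ?_ (bound_int c hc) ?_
  · exact ⟨main.1, main.2⟩
  · rw [ae_restrict_iff' measurableSet_Ioi]
    filter_upwards with u hu x hx
    have hu' : (0:ℝ) < u := hu
    rw [norm_mul, norm_mul, Real.norm_eq_abs, Real.norm_eq_abs, Real.norm_eq_abs, Real.abs_exp,
      show x * (-u ^ 3 / 6 + u / 2) = -x * (u ^ 3 / 6 - u / 2) by ring]
    calc |Real.sqrt u - 1 / Real.sqrt u| * |(-u ^ 3 / 6 + u / 2)| *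
          Real.exp (-x * (u ^ 3 / 6 - u / 2))
        ≤ (u ^ ((7:ℝ)/2) / 6 + u ^ ((3:ℝ)/2) / 2 + u ^ ((5:ℝ)/2) / 6 + u ^ ((1:ℝ)/2) / 2) *
          (Real.exp (3 * c / 2) * Real.exp (-(c/16) * u ^ 3)) := by
          apply mul_le_mul (prod_bound hu') (exp_bound2 hc hx hu'.le) (Real.exp_pos _).le
          have h1 := Real.rpow_nonneg hu'.le ((7:ℝ)/2)
          have h2 := Real.rpow_nonneg hu'.le ((3:ℝ)/2)
          have h3 := Real.rpow_nonneg hu'.le ((5:ℝ)/2)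
          have h4 := Real.rpow_nonneg hu'.le ((1:ℝ)/2)
          linarith
      _ = _ := by ring
  · filter_upwards with u x hx
    have H := ((((hasDerivAt_id x).neg.mul_const (u ^ 3 / 6 - u / 2)).exp).const_mul
      (Real.sqrt u - 1 / Real.sqrt u))
    simp only [Pi.neg_apply, id_eq] at H
    refine H.congr_deriv ?_
    rw [show x * (-u ^ 3 / 6 + u / 2) = -x * (u ^ 3 / 6 - u / 2) by ring]
    ring

private lemma sqrt3_facts : (1:ℝ) < Real.sqrt 3 ∧ Real.sqrt 3 < 2 := by
  have h := Real.sq_sqrt (by norm_num : (0:ℝ) ≤ 3)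
  have h0 := Real.sqrt_nonneg 3
  constructor <;> nlinarith

private lemma pair_core {c A B p q : ℝ} (hc : 0 < c) (hB : 0 < B) (hBA : B < A)
    (hq : 0 < q) (hqp : q < p) :
    -(A * p * Real.exp (c * p)) + B * q * Real.exp (c * q) < 0 := by
  have hp : 0 < p := lt_trans hq hqp
  have hA : 0 < A := lt_trans hB hBA
  have he : Real.exp (c * q) ≤ Real.exp (c * p) :=
    Real.exp_le_exp.mpr (by nlinarith)
  have hqe : q * Real.exp (c * q) < p * Real.exp (c * p) :=
    lt_of_lt_of_le (mul_lt_mul_of_pos_right hqp (Real.exp_pos _))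
      (mul_le_mul_of_nonneg_left he hp.le)
  have h1 : B * (q * Real.exp (c * q)) < A * (q * Real.exp (c * q)) :=
    mul_lt_mul_of_pos_right hBA (mul_pos hq (Real.exp_pos _))
  have h2 : A * (q * Real.exp (c * q)) < A * (p * Real.exp (c * p)) :=
    mul_lt_mul_of_pos_left hqe hA
  nlinarith [h1, h2]

private lemma pair_neg (c : ℝ) (hc : 0 < c) {t : ℝ} (ht : t ∈ Set.Ioo 0 (Real.sqrt 3 - 1)) :
    (Real.sqrt (1-t) - 1 / Real.sqrt (1-t)) * (-(1-t) ^ 3 / 6 + (1-t) / 2) *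
      Real.exp (c * (-(1-t) ^ 3 / 6 + (1-t) / 2)) +
    (Real.sqrt (1+t) - 1 / Real.sqrt (1+t)) * (-(1+t) ^ 3 / 6 + (1+t) / 2) *
      Real.exp (c * (-(1+t) ^ 3 / 6 + (1+t) / 2)) < 0 := by
  obtain ⟨h3, h32⟩ := sqrt3_facts
  obtain ⟨ht0, ht1⟩ := ht
  have h1t : (0:ℝ) < 1 - t := by linarith
  have h1t' : (0:ℝ) < 1 + t := by linarith
  have h33 : Real.sqrt 3 ^ 2 = 3 := Real.sq_sqrt (by norm_num)
  have hs1 : 0 < Real.sqrt (1 - t) := Real.sqrt_pos.mpr h1t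
  have hs2 : 0 < Real.sqrt (1 + t) := Real.sqrt_pos.mpr h1t'
  have hs1sq : Real.sqrt (1 - t) ^ 2 = 1 - t := Real.sq_sqrt h1t.le
  have hs2sq : Real.sqrt (1 + t) ^ 2 = 1 + t := Real.sq_sqrt h1t'.le
  have hs12 : Real.sqrt (1 - t) < Real.sqrt (1 + t) :=
    Real.sqrt_lt_sqrt h1t.le (by linarith)
  have hs3sq : (1 + t) ^ 2 < 3 := by nlinarith
  have hq_pos : 0 < -(1+t) ^ 3 / 6 + (1+t) / 2 := by nlinarith
  have hqp : -(1+t) ^ 3 / 6 + (1+t) / 2 < -(1-t) ^ 3 / 6 + (1-t) / 2 := by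
    nlinarith [pow_pos ht0 3]
  have e1 : Real.sqrt (1-t) - 1 / Real.sqrt (1-t) = -(t / Real.sqrt (1-t)) := by
    field_simp
    rw [hs1sq]; ring
  have e2 : Real.sqrt (1+t) - 1 / Real.sqrt (1+t) = t / Real.sqrt (1+t) := by
    field_simp
    rw [hs2sq]; ring
  have hB : 0 < t / Real.sqrt (1+t) := div_pos ht0 hs2
  have hBA : t / Real.sqrt (1+t) < t / Real.sqrt (1-t) :=
    div_lt_div_of_pos_left ht0 hs1 hs12
  have core := pair_core (A := t / Real.sqrt (1-t)) (B := t / Real.sqrt (1+t))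
    (p := -(1-t) ^ 3 / 6 + (1-t) / 2) (q := -(1+t) ^ 3 / 6 + (1+t) / 2)
    hc hB hBA hq_pos hqp
  rw [e1, e2]
  nlinarith [core]

private lemma phi_nonpos_left (c : ℝ) {u : ℝ} (hu : 0 < u) (hu1 : u ≤ 1) :
    (Real.sqrt u - 1 / Real.sqrt u) * (-u ^ 3 / 6 + u / 2) *
      Real.exp (c * (-u ^ 3 / 6 + u / 2)) ≤ 0 := by
  have hs : 0 < Real.sqrt u := Real.sqrt_pos.mpr hu
  have hs1 : Real.sqrt u ≤ 1 := by
    rw [show (1:ℝ) = Real.sqrt 1 by simp]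
    exact Real.sqrt_le_sqrt hu1
  have h1 : Real.sqrt u - 1 / Real.sqrt u ≤ 0 := by
    have : 1 ≤ 1 / Real.sqrt u := one_le_one_div hs hs1
    linarith
  have h2 : 0 ≤ -u ^ 3 / 6 + u / 2 := by
    nlinarith [mul_nonneg (mul_nonneg hu.le (sub_nonneg.mpr hu1)) (by linarith : (0:ℝ) ≤ 1 + u)]
  exact mul_nonpos_of_nonpos_of_nonneg
    (mul_nonpos_of_nonpos_of_nonneg h1 h2) (Real.exp_pos _).le

private lemma phi_nonpos_right (c : ℝ) {u : ℝ} (hu : Real.sqrt 3 ≤ u) :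
    (Real.sqrt u - 1 / Real.sqrt u) * (-u ^ 3 / 6 + u / 2) *
      Real.exp (c * (-u ^ 3 / 6 + u / 2)) ≤ 0 := by
  obtain ⟨h3, _⟩ := sqrt3_facts
  have hu1 : 1 ≤ u := by linarith
  have hu0 : 0 < u := by linarith
  have hs : 0 < Real.sqrt u := Real.sqrt_pos.mpr hu0
  have hs1 : 1 ≤ Real.sqrt u := by
    rw [show (1:ℝ) = Real.sqrt 1 by simp]
    exact Real.sqrt_le_sqrt hu1
  have h1 : 0 ≤ Real.sqrt u - 1 / Real.sqrt u := by
    have : 1 / Real.sqrt u ≤ 1 := by rw [div_le_one hs]; exact hs1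
    linarith
  have h33 : Real.sqrt 3 ^ 2 = 3 := Real.sq_sqrt (by norm_num)
  have hsq : 3 ≤ u ^ 2 := by
    calc (3:ℝ) = Real.sqrt 3 ^ 2 := h33.symm
      _ ≤ u ^ 2 := pow_le_pow_left₀ (Real.sqrt_nonneg 3) hu 2
  have h2 : -u ^ 3 / 6 + u / 2 ≤ 0 := by
    nlinarith [mul_le_mul_of_nonneg_left hsq hu0.le]
  exact mul_nonpos_of_nonpos_of_nonneg
    (mul_nonpos_of_nonneg_of_nonpos h1 h2) (Real.exp_pos _).le

private lemma integral_neg (c : ℝ) (hc : 0 < c)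
    (hint : IntegrableOn (fun u : ℝ => (Real.sqrt u - 1 / Real.sqrt u) * (-u ^ 3 / 6 + u / 2) *
        Real.exp (c * (-u ^ 3 / 6 + u / 2))) (Set.Ioi 0)) :
    (∫ u in Set.Ioi (0:ℝ), (Real.sqrt u - 1 / Real.sqrt u) * (-u ^ 3 / 6 + u / 2) *
        Real.exp (c * (-u ^ 3 / 6 + u / 2))) < 0 := by
  obtain ⟨h3, h32⟩ := sqrt3_facts
  set f : ℝ → ℝ := fun u => (Real.sqrt u - 1 / Real.sqrt u) * (-u ^ 3 / 6 + u / 2) *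
        Real.exp (c * (-u ^ 3 / 6 + u / 2)) with hf
  have hfval : ∀ v : ℝ, f v = (Real.sqrt v - 1 / Real.sqrt v) * (-v ^ 3 / 6 + v / 2) *
        Real.exp (c * (-v ^ 3 / 6 + v / 2)) := fun v => rfl
  have ha0 : 0 < 2 - Real.sqrt 3 := by linarith
  have ha1 : 2 - Real.sqrt 3 ≤ 1 := by linarith
  have h1b : (1:ℝ) ≤ Real.sqrt 3 := h3.le
  have hab : 2 - Real.sqrt 3 ≤ Real.sqrt 3 := by linarith
  have hs1 : Set.Ioi (0:ℝ) = Set.Ioc 0 (Real.sqrt 3) ∪ Set.Ioi (Real.sqrt 3) :=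
    (Set.Ioc_union_Ioi_eq_Ioi (by linarith)).symm
  have hs2 : Set.Ioc (0:ℝ) (Real.sqrt 3) =
      Set.Ioc 0 (2 - Real.sqrt 3) ∪ Set.Ioc (2 - Real.sqrt 3) (Real.sqrt 3) :=
    (Set.Ioc_union_Ioc_eq_Ioc ha0.le hab).symm
  have hd1 : Disjoint (Set.Ioc (0:ℝ) (Real.sqrt 3)) (Set.Ioi (Real.sqrt 3)) := by
    rw [Set.disjoint_left]; rintro x ⟨_, h1⟩ h2; exact absurd h1 (not_le.mpr h2)
  have hd2 : Disjoint (Set.Ioc (0:ℝ) (2 - Real.sqrt 3))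
      (Set.Ioc (2 - Real.sqrt 3) (Real.sqrt 3)) := by
    rw [Set.disjoint_left]; rintro x ⟨_, h1⟩ ⟨h2, _⟩; exact absurd h1 (not_le.mpr h2)
  have hi1 : IntegrableOn f (Set.Ioc 0 (2 - Real.sqrt 3)) := hint.mono_set Set.Ioc_subset_Ioi_self
  have hi2 : IntegrableOn f (Set.Ioc (2 - Real.sqrt 3) (Real.sqrt 3)) :=
    hint.mono_set fun x hx => lt_of_lt_of_le ha0 hx.1.le
  have hi12 : IntegrableOn f (Set.Ioc 0 (Real.sqrt 3)) := hint.mono_set Set.Ioc_subset_Ioi_self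
  have hi3 : IntegrableOn f (Set.Ioi (Real.sqrt 3)) :=
    hint.mono_set fun x hx => lt_trans (by linarith : (0:ℝ) < Real.sqrt 3) hx
  rw [hs1, setIntegral_union hd1 measurableSet_Ioi hi12 hi3, hs2,
    setIntegral_union hd2 measurableSet_Ioc hi1 hi2]
  have hI1 : (∫ u in Set.Ioc (0:ℝ) (2 - Real.sqrt 3), f u) ≤ 0 :=
    setIntegral_nonpos measurableSet_Ioc fun u hu =>
      phi_nonpos_left c hu.1 (le_trans hu.2 ha1)
  have hI3 : (∫ u in Set.Ioi (Real.sqrt 3), f u) ≤ 0 :=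
    setIntegral_nonpos measurableSet_Ioi fun u hu => phi_nonpos_right c (le_of_lt hu)
  have hI2 : (∫ u in Set.Ioc (2 - Real.sqrt 3) (Real.sqrt 3), f u) < 0 := by
    rw [← intervalIntegral.integral_of_le hab]
    have hIcc1 : Set.uIcc (2 - Real.sqrt 3) (1:ℝ) ⊆ Set.Ioi (0:ℝ) := by
      rw [Set.uIcc_of_le ha1]
      intro x hx; exact lt_of_lt_of_le ha0 hx.1
    have hIcc2 : Set.uIcc (1:ℝ) (Real.sqrt 3) ⊆ Set.Ioi (0:ℝ) := by
      rw [Set.uIcc_of_le h1b]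
      intro x hx; exact lt_of_lt_of_le one_pos hx.1
    have hii1 : IntervalIntegrable f volume (2 - Real.sqrt 3) 1 :=
      ((hcontF' c).mono hIcc1).intervalIntegrable
    have hii2 : IntervalIntegrable f volume 1 (Real.sqrt 3) :=
      ((hcontF' c).mono hIcc2).intervalIntegrable
    rw [← intervalIntegral.integral_add_adjacent_intervals hii1 hii2]
    have e_left : ∫ t in (0:ℝ)..(Real.sqrt 3 - 1), f (1 - t)
        = ∫ x in (2 - Real.sqrt 3)..(1:ℝ), f x := by
      rw [intervalIntegral.integral_comp_sub_left f 1,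
        show (1:ℝ) - (Real.sqrt 3 - 1) = 2 - Real.sqrt 3 by ring, sub_zero]
    have e_right : ∫ t in (0:ℝ)..(Real.sqrt 3 - 1), f (1 + t)
        = ∫ x in (1:ℝ)..(Real.sqrt 3), f x := by
      rw [intervalIntegral.integral_comp_add_left f 1, add_zero,
        show (1:ℝ) + (Real.sqrt 3 - 1) = Real.sqrt 3 by ring]
    have hd : (0:ℝ) < Real.sqrt 3 - 1 := by linarith
    have hmaps1 : Set.MapsTo (fun t : ℝ => 1 - t) (Set.uIcc 0 (Real.sqrt 3 - 1))
        (Set.Ioi 0) := by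
      rw [Set.uIcc_of_le hd.le]
      intro t ht'
      simp only [Set.mem_Icc] at ht'
      simp only [Set.mem_Ioi]
      linarith [ht'.2]
    have hmaps2 : Set.MapsTo (fun t : ℝ => 1 + t) (Set.uIcc 0 (Real.sqrt 3 - 1))
        (Set.Ioi 0) := by
      rw [Set.uIcc_of_le hd.le]
      intro t ht'
      simp only [Set.mem_Icc] at ht'
      simp only [Set.mem_Ioi]
      linarith [ht'.1]
    have hci1 : IntervalIntegrable (fun t => f (1 - t)) volume 0 (Real.sqrt 3 - 1) :=
      ((hcontF' c).comp ((continuous_const.sub continuous_id).continuousOn) hmaps1).intervalIntegrable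
    have hci2 : IntervalIntegrable (fun t => f (1 + t)) volume 0 (Real.sqrt 3 - 1) :=
      ((hcontF' c).comp ((continuous_const.add continuous_id).continuousOn) hmaps2).intervalIntegrable
    rw [← e_left, ← e_right, ← intervalIntegral.integral_add hci1 hci2]
    have hneg : 0 < ∫ t in (0:ℝ)..(Real.sqrt 3 - 1), -(f (1 - t) + f (1 + t)) := by
      apply intervalIntegral.intervalIntegral_pos_of_pos_on (hci1.add hci2).neg _ hd
      intro t ht'
      have hpn := pair_neg c hc ht'
      have hlt : f (1 - t) + f (1 + t) < 0 := by
        rw [hfval (1 - t), hfval (1 + t)]; exact hpn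
      show 0 < -(f (1 - t) + f (1 + t))
      linarith
    rw [intervalIntegral.integral_neg] at hneg
    linarith
  linarith


/-- `G(c) = ∫₀^∞ (√u − 1/√u) exp(−c(u³/6 − u/2)) du` is strictly decreasing on
`(0,∞)`; indeed its derivative
`G'(c) = ∫₀^∞ (√u − 1/√u)(−u³/6 + u/2) exp(c(−u³/6 + u/2)) du` is strictly
negative for every `c > 0`. -/
theorem G_strictAnti
    (G : ℝ → ℝ)
    (hG : ∀ c, G c = ∫ u in Set.Ioi (0:ℝ),
      (Real.sqrt u - 1 / Real.sqrt u) * Real.exp (-c * (u ^ 3 / 6 - u / 2))) :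
    StrictAntiOn G (Set.Ioi (0:ℝ)) ∧
    ∀ c > (0:ℝ),
      HasDerivAt G (∫ u in Set.Ioi (0:ℝ),
        (Real.sqrt u - 1 / Real.sqrt u) * (-u ^ 3 / 6 + u / 2) *
          Real.exp (c * (-u ^ 3 / 6 + u / 2))) c ∧
      (∫ u in Set.Ioi (0:ℝ),
        (Real.sqrt u - 1 / Real.sqrt u) * (-u ^ 3 / 6 + u / 2) *
          Real.exp (c * (-u ^ 3 / 6 + u / 2))) < 0 := by
  have hGeq : G = fun x => ∫ u in Set.Ioi (0:ℝ),
      (Real.sqrt u - 1 / Real.sqrt u) * Real.exp (-x * (u ^ 3 / 6 - u / 2)) := funext hG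
  have hd : ∀ c : ℝ, 0 < c → HasDerivAt G (∫ u in Set.Ioi (0:ℝ),
      (Real.sqrt u - 1 / Real.sqrt u) * (-u ^ 3 / 6 + u / 2) *
        Real.exp (c * (-u ^ 3 / 6 + u / 2))) c := by
    intro c hc
    rw [hGeq]
    exact (deriv_key c hc).2
  refine ⟨?_, fun c hc => ⟨hd c hc, integral_neg c hc (deriv_key c hc).1⟩⟩
  apply strictAntiOn_of_deriv_neg (convex_Ioi 0)
  · intro x hx
    exact (hd x hx).continuousAt.continuousWithinAt
  · intro x hx
    rw [interior_Ioi] at hx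
    rw [(hd x hx).deriv]
    exact integral_neg x hx (deriv_key x hx).1
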